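/- Equivalence of Method I and Method II nullsets on Cantor space: let m : [0,∞] → [0,∞] be monotone with m(r) > 0 for all r > 0 and m(2^{-n}) → 0 as n → ∞, and let H_m denote the Method II (metric outer/Hausdorff-type) measure on 2^ω with gauge m, i.e. the measure obtained from coverings by sets of arbitrarily small diameter weighted by m(diam). Then for every A ⊆ 2^ω: H_m(A) = 0 if and only if for every ε > 0 there is a countable set U of finite binary strings with A ⊆ ⋃_{σ ∈ U} N_σ and Σ_{σ ∈ U} m(2^{-|σ|}) ≤ ε. -/

import Mathlib

open MeasureTheory ENNReal

noncomputable local instance : MetricSpace (ℕ → Bool) := PiNat.metricSpace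

/-- The basic open cylinder `N_σ` of a finite binary string `σ` in Cantor space `2^ω`. -/
def cyl (σ : List Bool) : Set (ℕ → Bool) :=
  {x | ∀ i : Fin σ.length, x i = σ.get i}

section Helpers
open EMetric Set

lemma pw_eq (n : ℕ) : (2:ℝ≥0∞) ^ (-(n:ℤ)) = 2⁻¹ ^ n := by
  rw [ENNReal.zpow_neg, zpow_natCast, ← ENNReal.inv_pow]

lemma pw_pos (n : ℕ) : 0 < (2:ℝ≥0∞) ^ (-(n:ℤ)) :=
  ENNReal.zpow_pos two_ne_zero ENNReal.ofNat_ne_top _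

lemma pw_anti {a b : ℕ} (h : a ≤ b) : (2:ℝ≥0∞) ^ (-(b:ℤ)) ≤ (2:ℝ≥0∞) ^ (-(a:ℤ)) :=
  ENNReal.zpow_le_of_le one_le_two (by exact_mod_cast neg_le_neg (Int.ofNat_le.2 h))

lemma ofr (k : ℕ) : ENNReal.ofReal ((1/2:ℝ)^k) = (2⁻¹:ℝ≥0∞) ^ k := by
  rw [ENNReal.ofReal_pow (by norm_num), one_div, ENNReal.ofReal_inv_of_pos (by norm_num),
    ENNReal.ofReal_ofNat]

lemma edist_eq (x y : ℕ → Bool) (h : x ≠ y) :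
    edist x y = (2:ℝ≥0∞) ^ (-(PiNat.firstDiff x y : ℤ)) := by
  rw [edist_dist, PiNat.dist_eq_of_ne h, pw_eq, ofr]

lemma edist_le_iff' (x y : ℕ → Bool) (k : ℕ) :
    edist x y ≤ (2:ℝ≥0∞) ^ (-(k:ℤ)) ↔ dist x y ≤ (1/2:ℝ)^k := by
  rw [edist_dist, pw_eq, ← ofr, ENNReal.ofReal_le_ofReal_iff (by positivity)]

/-- a set of small diameter is contained in a cylinder -/
lemma subset_cylinder {S : Set (ℕ → Bool)} {x : ℕ → Bool} (hx : x ∈ S) {k : ℕ}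
    (h : EMetric.diam S ≤ (2:ℝ≥0∞) ^ (-(k:ℤ))) : S ⊆ PiNat.cylinder x k := by
  intro y hy
  rw [PiNat.mem_cylinder_iff_dist_le]
  exact (edist_le_iff' y x k).1 ((edist_le_diam_of_mem hy hx).trans h)

/-- the diameter of a nontrivial set is attained and is a power of two -/
lemma exists_diam_eq {S : Set (ℕ → Bool)} (h : 0 < EMetric.diam S) :
    ∃ k : ℕ, EMetric.diam S = (2:ℝ≥0∞) ^ (-(k:ℤ)) := by
  classical
  have hex : ∃ k : ℕ, (2:ℝ≥0∞) ^ (-(k:ℤ)) < EMetric.diam S := by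
    obtain ⟨n, hn⟩ := ENNReal.exists_inv_two_pow_lt h.ne'
    exact ⟨n, by rw [pw_eq]; exact hn⟩
  set k := Nat.find hex with hk
  have hklt : (2:ℝ≥0∞) ^ (-(k:ℤ)) < EMetric.diam S := Nat.find_spec hex
  -- find points with large edist
  have : ∃ x ∈ S, ∃ y ∈ S, (2:ℝ≥0∞) ^ (-(k:ℤ)) < edist x y := by
    by_contra hcon
    push_neg at hcon
    exact absurd (diam_le hcon) (not_le.2 hklt)
  obtain ⟨x, hx, y, hy, hxy⟩ := this
  have hne : x ≠ y := by
    rintro rfl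
    simp at hxy
  rw [edist_eq x y hne] at hxy
  set j := PiNat.firstDiff x y with hj
  have hjk : j < k := by
    by_contra hle
    exact absurd (pw_anti (not_lt.1 hle)) (not_le.2 hxy)
  have h1 : EMetric.diam S ≤ (2:ℝ≥0∞) ^ (-(j:ℤ)) :=
    not_lt.1 (Nat.find_min hex hjk)
  have h2 : (2:ℝ≥0∞) ^ (-(j:ℤ)) ≤ EMetric.diam S := by
    rw [← edist_eq x y hne]
    exact edist_le_diam_of_mem hx hy
  exact ⟨j, le_antisymm h1 h2⟩

lemma cyl_ofFn (x : ℕ → Bool) (k : ℕ) :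
    cyl (List.ofFn fun i : Fin k => x i) = PiNat.cylinder x k := by
  ext y
  simp only [cyl, PiNat.cylinder, mem_setOf_eq, List.get_ofFn]
  constructor
  · intro h i hi
    have := h (Fin.cast List.length_ofFn.symm ⟨i, hi⟩)
    simpa using this
  · intro h i
    have hi : (i : ℕ) < k := by
      have := i.2
      simpa [List.length_ofFn] using this
    simpa using h i hi

lemma length_ofFn (x : ℕ → Bool) (k : ℕ) :
    (List.ofFn fun i : Fin k => x i).length = k := List.length_ofFn

lemma diam_cyl_le (σ : List Bool) :
    EMetric.diam (cyl σ) ≤ (2:ℝ≥0∞) ^ (-(σ.length:ℤ)) := by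
  apply diam_le
  intro x hx y hy
  rw [edist_le_iff']
  rw [← PiNat.mem_cylinder_iff_dist_le]
  intro i hi
  have h1 := hx ⟨i, hi⟩
  have h2 := hy ⟨i, hi⟩
  simp only [List.get_eq_getElem] at h1 h2
  rw [h1, h2]

end Helpers

theorem stmt9 (m : ℝ≥0∞ → ℝ≥0∞) (hmono : Monotone m)
    (hpos : ∀ r : ℝ≥0∞, 0 < r → 0 < m r)
    (hlim : Filter.Tendsto (fun n : ℕ => m (2 ^ (-(n : ℤ)))) Filter.atTop (nhds 0))
    (A : Set (ℕ → Bool)) :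
    Measure.mkMetric m A = 0 ↔
      ∀ ε : ℝ≥0∞, 0 < ε → ∃ U : Set (List Bool), U.Countable ∧
        A ⊆ (⋃ σ ∈ U, cyl σ) ∧
        ∑' σ : U, m (2 ^ (-((σ : List Bool).length : ℤ))) ≤ ε := by
  classical
  constructor
  · -- Method II null → Method I null
    intro h ε hε
    rw [Measure.mkMetric_apply] at h
    have h1 : (⨅ (t : ℕ → Set (ℕ → Bool)) (_ : A ⊆ Set.iUnion t)
        (_ : ∀ n, EMetric.diam (t n) ≤ 1),
        ∑' n, ⨆ _ : (t n).Nonempty, m (EMetric.diam (t n))) = 0 := by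
      refine le_antisymm ?_ zero_le
      rw [← h]
      exact le_iSup₂ (f := fun (r : ℝ≥0∞) (_ : 0 < r) =>
        ⨅ (t : ℕ → Set (ℕ → Bool)) (_ : A ⊆ Set.iUnion t)
          (_ : ∀ n, EMetric.diam (t n) ≤ r),
          ∑' n, ⨆ _ : (t n).Nonempty, m (EMetric.diam (t n))) 1 zero_lt_one
    have h2 : (⨅ (t : ℕ → Set (ℕ → Bool)) (_ : A ⊆ Set.iUnion t)
        (_ : ∀ n, EMetric.diam (t n) ≤ 1),
        ∑' n, ⨆ _ : (t n).Nonempty, m (EMetric.diam (t n))) < ε / 2 := by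
      rw [h1]; exact ENNReal.half_pos hε.ne'
    simp only [iInf_lt_iff] at h2
    obtain ⟨t, hcov, hdiam, hsum⟩ := h2
    have key : ∀ n : ℕ, ∃ σ : List Bool, (t n).Nonempty →
        (t n ⊆ cyl σ ∧ m (2 ^ (-(σ.length : ℤ))) ≤
          (⨆ _ : (t n).Nonempty, m (EMetric.diam (t n))) + ε / 2 * 2⁻¹ ^ (n + 1)) := by
      intro n
      by_cases hne : (t n).Nonempty
      · rcases eq_or_lt_of_le (zero_le : 0 ≤ EMetric.diam (t n)) with hd | hd
        · have hp : (0 : ℝ≥0∞) < ε / 2 * 2⁻¹ ^ (n + 1) := by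
            apply ENNReal.mul_pos (ENNReal.half_pos hε.ne').ne'
            exact (ENNReal.pow_pos (by norm_num) _).ne'
          obtain ⟨k, hk⟩ := (hlim.eventually_lt_const hp).exists
          obtain ⟨x, hx⟩ := id hne
          refine ⟨List.ofFn fun i : Fin k => x i, fun _ => ⟨?_, ?_⟩⟩
          · rw [cyl_ofFn]
            exact subset_cylinder hx (by rw [← hd]; exact (pw_pos k).le)
          · rw [length_ofFn]
            exact le_add_left hk.le
        · obtain ⟨k, hk⟩ := exists_diam_eq hd
          obtain ⟨x, hx⟩ := id hne
          refine ⟨List.ofFn fun i : Fin k => x i, fun _ => ⟨?_, ?_⟩⟩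
          · rw [cyl_ofFn]; exact subset_cylinder hx hk.le
          · rw [length_ofFn, ← hk]
            refine le_add_right ?_
            simp [hne]
      · exact ⟨[], fun hc => absurd hc hne⟩
    choose σ hσ using key
    refine ⟨σ '' {n | (t n).Nonempty}, (Set.to_countable _).image _, ?_, ?_⟩
    · intro x hxA
      obtain ⟨n, hn⟩ := Set.mem_iUnion.1 (hcov hxA)
      have hne : (t n).Nonempty := ⟨x, hn⟩
      exact Set.mem_biUnion (Set.mem_image_of_mem _ hne) ((hσ n hne).1 hn)
    · set f : List Bool → ℝ≥0∞ := fun τ => m (2 ^ (-(τ.length : ℤ))) with hf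
      set s : Set ℕ := {n | (t n).Nonempty} with hs
      have step1 : ∑' u : (σ '' s), f u ≤ ∑' n : s, f (σ n) := by
        apply ENNReal.tsum_le_tsum_comp_of_surjective
          (f := fun n : s => (⟨σ n, Set.mem_image_of_mem _ n.2⟩ : σ '' s))
        rintro ⟨u, n, hn, rfl⟩
        exact ⟨⟨n, hn⟩, rfl⟩
      set g : ℕ → ℝ≥0∞ := fun n =>
        (⨆ _ : (t n).Nonempty, m (EMetric.diam (t n))) + ε / 2 * 2⁻¹ ^ (n + 1) with hg
      have step2 : ∑' n : s, f (σ n) ≤ ∑' n : ℕ, g n := by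
        calc ∑' n : s, f (σ n) ≤ ∑' n : s, g n :=
              ENNReal.tsum_le_tsum fun n => (hσ n n.2).2
          _ ≤ ∑' n : ℕ, g n := ENNReal.tsum_comp_le_tsum_of_injective Subtype.val_injective g
      have step3 : ∑' n : ℕ, g n ≤ ε := by
        rw [hg, ENNReal.tsum_add]
        have hb : ∑' n : ℕ, ε / 2 * 2⁻¹ ^ (n + 1) = ε / 2 := by
          rw [ENNReal.tsum_mul_left]
          have hgeo : ∑' n : ℕ, (2⁻¹ : ℝ≥0∞) ^ (n + 1) = 1 := by
            simp_rw [pow_succ']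
            rw [ENNReal.tsum_mul_left, ENNReal.tsum_geometric, ENNReal.one_sub_inv_two, inv_inv]
            exact ENNReal.inv_mul_cancel two_ne_zero ENNReal.ofNat_ne_top
          rw [hgeo, mul_one]
        calc _ ≤ ε / 2 + ε / 2 := add_le_add hsum.le hb.le
          _ = ε := ENNReal.add_halves ε
      exact (step1.trans step2).trans step3
  · -- Method I null → Method II null
    intro H
    refine le_antisymm ?_ zero_le
    refine ENNReal.le_of_forall_pos_le_add fun ε hε _ => ?_
    rw [zero_add]
    have hε' : (0 : ℝ≥0∞) < ε := ENNReal.coe_pos.2 hε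
    set ε' : ℕ → ℝ≥0∞ := fun n => min (ε : ℝ≥0∞) (m (2 ^ (-(n : ℤ))) / 2) with hε'def
    have hε'pos : ∀ n, 0 < ε' n := fun n =>
      lt_min hε' (ENNReal.half_pos (hpos _ (pw_pos n)).ne')
    have hε'lt : ∀ n, ε' n < m (2 ^ (-(n : ℤ))) := by
      intro n
      rcases eq_or_ne (m (2 ^ (-(n : ℤ)))) ∞ with h | h
      · refine (min_le_left _ _).trans_lt ?_
        rw [h]; exact ENNReal.coe_lt_top
      · exact (min_le_right _ _).trans_lt (ENNReal.half_lt_self (hpos _ (pw_pos n)).ne' h)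
    choose U hUc hUcov hUsum using fun n => H (ε' n) (hε'pos n)
    haveI : ∀ n, Countable (U n) := fun n => (hUc n).to_subtype
    have hlen : ∀ n : ℕ, ∀ σ ∈ U n, (2 : ℝ≥0∞) ^ (-(σ.length : ℤ)) < 2 ^ (-(n : ℤ)) := by
      intro n σ hσ
      by_contra hge
      push_neg at hge
      have h1 : m (2 ^ (-(n : ℤ))) ≤ m (2 ^ (-(σ.length : ℤ))) := hmono hge
      have h2 : m (2 ^ (-(σ.length : ℤ))) ≤ ε' n :=
        le_trans (ENNReal.le_tsum (⟨σ, hσ⟩ : U n)) (hUsum n)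
      exact absurd ((h1.trans h2).trans_lt (hε'lt n)) (lt_irrefl _)
    have hr : Filter.Tendsto (fun n : ℕ => (2 : ℝ≥0∞) ^ (-(n : ℤ))) Filter.atTop (nhds 0) := by
      simp_rw [pw_eq]
      exact ENNReal.tendsto_pow_atTop_nhds_zero_of_lt_one
        (by simp [ENNReal.inv_lt_one, ENNReal.one_lt_two])
    have ht : ∀ᶠ n in Filter.atTop, ∀ i : U n,
        EMetric.diam (cyl (i : List Bool)) ≤ (2 : ℝ≥0∞) ^ (-(n : ℤ)) :=
      Filter.Eventually.of_forall fun n i =>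
        (diam_cyl_le _).trans (hlen n i i.2).le
    have hst : ∀ᶠ n in Filter.atTop, A ⊆ ⋃ i : U n, cyl (i : List Bool) :=
      Filter.Eventually.of_forall fun n => (hUcov n).trans (Set.biUnion_eq_iUnion _ _).subset
    refine (Measure.mkMetric_le_liminf_tsum A _ hr (fun n (i : U n) => cyl i) ht hst m).trans ?_
    have hbound : ∀ n : ℕ, ∑' i : U n, m (EMetric.diam (cyl (i : List Bool))) ≤ (ε : ℝ≥0∞) := by
      intro n
      calc ∑' i : U n, m (EMetric.diam (cyl (i : List Bool)))
          ≤ ∑' i : U n, m (2 ^ (-((i : List Bool).length : ℤ))) :=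
            ENNReal.tsum_le_tsum fun i => hmono (diam_cyl_le _)
        _ ≤ ε' n := hUsum n
        _ ≤ ε := min_le_left _ _
    calc Filter.liminf (fun n => ∑' i : U n, m (EMetric.diam (cyl (i : List Bool))))
          Filter.atTop ≤ Filter.liminf (fun _ => (ε : ℝ≥0∞)) Filter.atTop :=
          Filter.liminf_le_liminf (Filter.Eventually.of_forall hbound)
      _ = ε := Filter.liminf_const _
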